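/- If X is an answer set of a normal propositional program P, then there exists an enumeration ⟨r_1,…,r_n⟩ of GR_P(X) such that for all i, body⁺(r_i) ⊆ head({r_j | j < i}), and additionally for all j > i, if body⁺(r_j) ⊆ head({r_k | k < i}) and body⁻(r_j) ⊆ body⁻({r_k | k < i}), then body⁻(r_i) ⊆ body⁻({r_k | k < i}). -/

import Mathlib

structure Rule (α : Type) where
  head : α
  pos : Set α
  neg : Set α

variable {α : Type}

def TP (P : Set (Rule α)) (X : Set α) : Set α :=
  {a | ∃ r ∈ P, r.head = a ∧ r.pos ⊆ X}

def Cn (P : Set (Rule α)) : Set α :=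
  ⋂₀ {X | TP P X ⊆ X}

def reduct (P : Set (Rule α)) (X : Set α) : Set (Rule α) :=
  {r' | ∃ r ∈ P, r.neg ∩ X = ∅ ∧ r' = ⟨r.head, r.pos, ∅⟩}

def AnswerSet (P : Set (Rule α)) (X : Set α) : Prop :=
  X = Cn (reduct P X)

def GR (P : Set (Rule α)) (X : Set α) : Set (Rule α) :=
  {r ∈ P | r.pos ⊆ X ∧ r.neg ∩ X = ∅}

def heads (R : Set (Rule α)) : Set α := Rule.head '' R

def negs (R : Set (Rule α)) : Set α := ⋃ r ∈ R, r.neg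

def prefixSet (l : List (Rule α)) (i : ℕ) : Set (Rule α) :=
  {r | ∃ j < i, l[j]? = some r}

def Grounded (R : Set (Rule α)) : Prop :=
  ∃ l : List (Rule α), l.Nodup ∧ (∀ r, r ∈ R ↔ r ∈ l) ∧
    ∀ i (hi : i < l.length), (l.get ⟨i, hi⟩).pos ⊆ heads (prefixSet l i)

/-! ### Auxiliary lemmas -/

lemma prefixSet_zero (l : List (Rule α)) : prefixSet l 0 = ∅ := by
  ext s; simp [prefixSet]

lemma prefixSet_cons_succ (r : Rule α) (l : List (Rule α)) (k : ℕ) :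
    prefixSet (r :: l) (k + 1) = insert r (prefixSet l k) := by
  ext s
  simp only [prefixSet, Set.mem_setOf_eq, Set.mem_insert_iff]
  constructor
  · rintro ⟨j, hj, hval⟩
    cases j with
    | zero => left; simp only [List.getElem?_cons_zero, Option.some.injEq] at hval
              exact hval.symm
    | succ j' => right; exact ⟨j', by omega, by simpa using hval⟩
  · rintro (rfl | ⟨j, hj, hval⟩)
    · exact ⟨0, by omega, by simp⟩
    · exact ⟨j + 1, by omega, by simpa using hval⟩

lemma Cn_prefixed (Q : Set (Rule α)) : TP Q (Cn Q) ⊆ Cn Q := by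
  rintro a ⟨r, hrQ, hhead, hpos⟩
  intro Y hY
  exact hY ⟨r, hrQ, hhead, fun x hx => (Set.sInter_subset_of_mem hY) (hpos hx)⟩

lemma TP_reduct_subset (P : Set (Rule α)) (X : Set α) (hX : AnswerSet P X) :
    TP (reduct P X) X ⊆ X := by
  have h := Cn_prefixed (reduct P X)
  rw [← hX] at h
  exact h

lemma heads_GR_subset (P : Set (Rule α)) (X : Set α) (hX : AnswerSet P X) :
    heads (GR P X) ⊆ X := by
  rintro a ⟨r, ⟨hrP, hpos, hneg⟩, rfl⟩
  exact TP_reduct_subset P X hX ⟨⟨r.head, r.pos, ∅⟩, ⟨r, hrP, hneg, rfl⟩, rfl, hpos⟩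

lemma exists_applicable (P : Set (Rule α)) (X : Set α) (hX : AnswerSet P X)
    (R : Set (Rule α)) (hsub : R ⊆ GR P X) (hne : R.Nonempty) :
    ∃ r ∈ R, r.pos ⊆ heads (GR P X \ R) := by
  by_contra h
  push_neg at h
  have hZX : heads (GR P X \ R) ⊆ X :=
    (Set.image_mono Set.diff_subset).trans (heads_GR_subset P X hX)
  have hpref : TP (reduct P X) (heads (GR P X \ R)) ⊆ heads (GR P X \ R) := by
    rintro a ⟨r', ⟨r, hrP, hneg, rfl⟩, hhead, hpos⟩
    simp only at hhead hpos
    have hposX : r.pos ⊆ X := hpos.trans hZX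
    have hrGR : r ∈ GR P X := ⟨hrP, hposX, hneg⟩
    by_cases hrR : r ∈ R
    · exact absurd hpos (h r hrR)
    · exact hhead ▸ ⟨r, ⟨hrGR, hrR⟩, rfl⟩
  have hXZ : X ⊆ heads (GR P X \ R) := by
    have h2 : Cn (reduct P X) ⊆ heads (GR P X \ R) := Set.sInter_subset_of_mem hpref
    rw [← hX] at h2
    exact h2
  obtain ⟨r0, hr0⟩ := hne
  exact h r0 hr0 (((hsub hr0).2.1).trans hXZ)

lemma main_enum (P : Set (Rule α)) (X : Set α) (hX : AnswerSet P X)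
    (hGR : (GR P X).Finite) :
    ∀ (n : ℕ) (R : Set (Rule α)), R ⊆ GR P X → R.ncard = n →
    ∃ l : List (Rule α), l.Nodup ∧ (∀ r, r ∈ R ↔ r ∈ l) ∧
      ∀ i (hi : i < l.length),
        (l.get ⟨i, hi⟩).pos ⊆ heads (GR P X \ R ∪ prefixSet l i) ∧
        (∀ j (hj : j < l.length), i < j →
          (l.get ⟨j, hj⟩).pos ⊆ heads (GR P X \ R ∪ prefixSet l i) →
          (l.get ⟨j, hj⟩).neg ⊆ negs (GR P X \ R ∪ prefixSet l i) →
          (l.get ⟨i, hi⟩).neg ⊆ negs (GR P X \ R ∪ prefixSet l i)) := by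
  intro n
  induction n using Nat.strong_induction_on with
  | _ n IH =>
    intro R hsub hcard
    rcases R.eq_empty_or_nonempty with rfl | hne
    · exact ⟨[], List.nodup_nil, by simp, fun i hi => absurd hi (by simp)⟩
    have hRfin : R.Finite := hGR.subset hsub
    obtain ⟨r, hrR, hrpos, hpref⟩ :
        ∃ r ∈ R, r.pos ⊆ heads (GR P X \ R) ∧
          ((∃ s ∈ R, s.pos ⊆ heads (GR P X \ R) ∧ s.neg ⊆ negs (GR P X \ R)) →
            r.neg ⊆ negs (GR P X \ R)) := by
      by_cases hB : ∃ s ∈ R, s.pos ⊆ heads (GR P X \ R) ∧ s.neg ⊆ negs (GR P X \ R)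
      · obtain ⟨s, hs, hp, hn⟩ := hB
        exact ⟨s, hs, hp, fun _ => hn⟩
      · obtain ⟨r, hrR, hrpos⟩ := exists_applicable P X hX R hsub hne
        exact ⟨r, hrR, hrpos, fun hc => absurd hc hB⟩
    have hsub' : R \ {r} ⊆ GR P X := Set.diff_subset.trans hsub
    have hlt : (R \ {r}).ncard < n :=
      hcard ▸ Set.ncard_diff_singleton_lt_of_mem hrR hRfin
    obtain ⟨l', hnd', hmem', hcond'⟩ := IH _ hlt (R \ {r}) hsub' rfl
    have hGRR' : GR P X \ (R \ {r}) = insert r (GR P X \ R) := by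
      ext s
      simp only [Set.mem_diff, Set.mem_singleton_iff, Set.mem_insert_iff]
      constructor
      · rintro ⟨hsGR, hsR'⟩
        by_cases h : s = r
        · exact Or.inl h
        · exact Or.inr ⟨hsGR, fun hsR => hsR' ⟨hsR, h⟩⟩
      · rintro (rfl | ⟨hsGR, hsR⟩)
        · exact ⟨hsub hrR, fun h => h.2 rfl⟩
        · exact ⟨hsGR, fun h => hsR h.1⟩
    have hrl' : r ∉ l' := fun h => ((hmem' r).mpr h).2 rfl
    refine ⟨r :: l', List.nodup_cons.mpr ⟨hrl', hnd'⟩, ?_, ?_⟩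
    · intro s
      simp only [List.mem_cons]
      constructor
      · intro hs
        by_cases h : s = r
        · exact Or.inl h
        · exact Or.inr ((hmem' s).mp ⟨hs, h⟩)
      · rintro (rfl | h)
        · exact hrR
        · exact ((hmem' s).mpr h).1
    · intro i hi
      cases i with
      | zero =>
        rw [prefixSet_zero, Set.union_empty]
        refine ⟨hrpos, ?_⟩
        intro j hj h0j hpos hneg
        cases j with
        | zero => omega
        | succ j' =>
          have hj' : j' < l'.length := Nat.succ_lt_succ_iff.mp hj
          have hmemj : l'.get ⟨j', hj'⟩ ∈ R \ {r} := (hmem' _).mpr (l'.get_mem _)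
          exact hpref ⟨l'.get ⟨j', hj'⟩, hmemj.1, hpos, hneg⟩
      | succ k =>
        have hk : k < l'.length := Nat.succ_lt_succ_iff.mp hi
        have hsets : GR P X \ R ∪ prefixSet (r :: l') (k + 1) =
            GR P X \ (R \ {r}) ∪ prefixSet l' k := by
          rw [prefixSet_cons_succ, Set.union_insert, ← Set.insert_union, ← hGRR']
        obtain ⟨h1, h2⟩ := hcond' k hk
        constructor
        · rw [hsets]
          exact h1
        · intro j hj hij hpos hneg
          cases j with
          | zero => omega
          | succ j' =>
            have hj' : j' < l'.length := Nat.succ_lt_succ_iff.mp hj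
            rw [hsets] at hpos hneg ⊢
            exact h2 j' hj' (Nat.succ_lt_succ_iff.mp hij) hpos hneg

theorem answerSet_enumeration (α : Type) (P : Set (Rule α)) (hP : P.Finite)
    (X : Set α) (hX : AnswerSet P X) :
    ∃ l : List (Rule α), l.Nodup ∧ (∀ r, r ∈ GR P X ↔ r ∈ l) ∧
      ∀ i (hi : i < l.length),
        (l.get ⟨i, hi⟩).pos ⊆ heads (prefixSet l i) ∧
        (∀ j (hj : j < l.length), i < j →
          (l.get ⟨j, hj⟩).pos ⊆ heads (prefixSet l i) →
          (l.get ⟨j, hj⟩).neg ⊆ negs (prefixSet l i) →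
          (l.get ⟨i, hi⟩).neg ⊆ negs (prefixSet l i)) := by
  have hGRfin : (GR P X).Finite := hP.subset (fun r hr => hr.1)
  obtain ⟨l, hnd, hmem, hcond⟩ :=
    main_enum P X hX hGRfin (GR P X).ncard (GR P X) subset_rfl rfl
  refine ⟨l, hnd, hmem, fun i hi => ?_⟩
  have h := hcond i hi
  simpa only [Set.diff_self, Set.empty_union] using h
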